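/- For every n ≥ 0, (Σ_{k=0}^{n} binomial(2n, n+k)) mod 2 equals the augmented Rueppel sequence r⁺_n, which is 1 if n = 0 or n = 2^k for some k ≥ 0, and 0 otherwise. -/

import Mathlib

open Classical

open Finset

lemma two_mul_sum (n : ℕ) :
    2 * (∑ k ∈ Finset.range (n + 1), Nat.choose (2 * n) (n + k))
      = 2 ^ (2 * n) + Nat.choose (2 * n) n := by
  have h1 : (∑ j ∈ range (2 * n + 1), Nat.choose (2 * n) j) = 2 ^ (2 * n) :=
    Nat.sum_range_choose (2 * n)
  have hsplit : (∑ j ∈ range (2 * n + 1), Nat.choose (2 * n) j)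
      = (∑ j ∈ range n, Nat.choose (2 * n) j)
        + ∑ k ∈ range (n + 1), Nat.choose (2 * n) (n + k) := by
    have : 2 * n + 1 = n + (n + 1) := by ring
    rw [this, Finset.sum_range_add]
  have hrefl : (∑ j ∈ range n, Nat.choose (2 * n) j)
      = ∑ i ∈ range n, Nat.choose (2 * n) (n + (i + 1)) := by
    rw [← Finset.sum_range_reflect (fun i => Nat.choose (2 * n) (n + (i + 1))) n]
    apply Finset.sum_congr rfl
    intro j hj
    rw [Finset.mem_range] at hj
    have h2 : n + (n - 1 - j + 1) = 2 * n - j := by omega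
    rw [h2]
    have h3 : j ≤ 2 * n := by omega
    have := Nat.choose_symm h3
    have h4 : 2 * n - (2 * n - j) = j := by omega
    rw [← Nat.choose_symm (Nat.sub_le (2 * n) j), h4]
  have hshift : (∑ k ∈ range (n + 1), Nat.choose (2 * n) (n + k))
      = Nat.choose (2 * n) n + ∑ i ∈ range n, Nat.choose (2 * n) (n + (i + 1)) := by
    rw [Finset.sum_range_succ']
    simp only [Nat.add_zero]
    omega
  omega

instance : Fact (Nat.Prime 2) := ⟨Nat.prime_two⟩

lemma central_even (m : ℕ) :
    Nat.choose (2 * (m + 1)) (m + 1) = 2 * Nat.choose (2 * m + 1) (m + 1) := by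
  have h : Nat.choose (2 * (m + 1)) (m + 1)
      = Nat.choose (2 * m + 1) m + Nat.choose (2 * m + 1) (m + 1) := by
    have h2 : 2 * (m + 1) = (2 * m + 1) + 1 := by ring
    rw [h2, Nat.choose_succ_succ]
  have hsymm : Nat.choose (2 * m + 1) m = Nat.choose (2 * m + 1) (m + 1) := by
    have hk : m + 1 ≤ 2 * m + 1 := by omega
    have := Nat.choose_symm hk
    have h4 : 2 * m + 1 - (m + 1) = m := by omega
    rw [h4] at this
    exact this
  omega

lemma key (n : ℕ) : Nat.choose (2 * n + 1) (n + 1) % 2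
    = if ∃ k : ℕ, n + 1 = 2 ^ k then 1 else 0 := by
  induction n using Nat.strong_induction_on with
  | _ n ih =>
    have lucas := Choose.choose_modEq_choose_mod_mul_choose_div_nat
      (p := 2) (n := 2 * n + 1) (k := n + 1)
    rw [Nat.ModEq] at lucas
    rcases Nat.even_or_odd n with ⟨m, hm⟩ | ⟨m, hm⟩
    · -- n = 2m : n + 1 = 2m+1 odd
      subst hm
      rcases Nat.eq_zero_or_pos m with rfl | hmpos
      · have hp : (0:ℕ) + 0 + 1 = 2 ^ 0 := rfl
        rw [if_pos ⟨0, hp⟩]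
        decide
      · have h1 : (2 * (m + m) + 1) % 2 = 1 := by omega
        have h2 : (m + m + 1) % 2 = 1 := by omega
        have h3 : (2 * (m + m) + 1) / 2 = 2 * m := by omega
        have h4 : (m + m + 1) / 2 = m := by omega
        rw [lucas, h1, h2, h3, h4]
        have heven : Nat.choose (2 * m) m % 2 = 0 := by
          obtain ⟨m', rfl⟩ : ∃ m', m = m' + 1 := ⟨m - 1, by omega⟩
          rw [central_even m']
          omega
        have hnot : ¬ ∃ k : ℕ, m + m + 1 = 2 ^ k := by
          rintro ⟨k, hk⟩
          rcases k with _ | k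
          · omega
          · have : 2 ^ (k + 1) % 2 = 0 := by
              simp [pow_succ, Nat.mul_mod]
            omega
        rw [if_neg hnot]
        simpa using heven
    · -- n = 2m+1 : n + 1 = 2m+2 even
      subst hm
      have h1 : (2 * (2 * m + 1) + 1) % 2 = 1 := by omega
      have h2 : (2 * m + 1 + 1) % 2 = 0 := by omega
      have h3 : (2 * (2 * m + 1) + 1) / 2 = 2 * m + 1 := by omega
      have h4 : (2 * m + 1 + 1) / 2 = m + 1 := by omega
      rw [lucas, h1, h2, h3, h4]
      have hiff : (∃ k : ℕ, 2 * m + 1 + 1 = 2 ^ k) ↔ (∃ k : ℕ, m + 1 = 2 ^ k) := by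
        constructor
        · rintro ⟨k, hk⟩
          rcases k with _ | k
          · omega
          · exact ⟨k, by rw [pow_succ] at hk; omega⟩
        · rintro ⟨k, hk⟩
          exact ⟨k + 1, by rw [pow_succ]; omega⟩
      rw [if_congr hiff rfl rfl, ← ih m (by omega)]
      simp

/-- The augmented Rueppel sequence: `1` at `n = 0` and at powers of `2`. -/

noncomputable def rueppelAug (n : ℕ) : ℕ := if n = 0 ∨ ∃ k : ℕ, n = 2 ^ k then 1 else 0

theorem rueppel_horizontal_half (n : ℕ) :
    (∑ k ∈ Finset.range (n + 1), Nat.choose (2 * n) (n + k)) % 2 = rueppelAug n := by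
  rcases n with _ | m
  · simp [rueppelAug]
  · have h2S := two_mul_sum (m + 1)
    have hc := central_even m
    have hS : (∑ k ∈ Finset.range (m + 1 + 1), Nat.choose (2 * (m + 1)) (m + 1 + k))
        = 2 ^ (2 * m + 1) + Nat.choose (2 * m + 1) (m + 1) := by
      have hpow : 2 ^ (2 * (m + 1)) = 2 * 2 ^ (2 * m + 1) := by
        rw [← pow_succ']
        ring_nf
      omega
    have hpe : 2 ^ (2 * m + 1) % 2 = 0 := by
      simp [pow_succ', Nat.mul_mod]
    rw [hS, Nat.add_mod, hpe, Nat.zero_add, Nat.mod_mod_of_dvd _ dvd_rfl, key m, rueppelAug]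
    have hne : ¬ (m + 1 = 0) := by omega
    by_cases h : ∃ k : ℕ, m + 1 = 2 ^ k
    · rw [if_pos h, if_pos (Or.inr h)]
    · rw [if_neg h, if_neg (by tauto)]
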